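/- Let P be a simple closed n-gon in ℝ² with n ≥ 3, and let a ∈ ℝ² \ P. Then a sees at least two distinct vertices of P via ℝ² \ P; that is, there exist distinct vertices c', c'' of P with the open segments (a,c') and (a,c'') disjoint from P. -/

import Mathlib

open Set Metric

abbrev Plane := EuclideanSpace ℝ (Fin 2)

/-- The `i`-th edge of the closed polygon with vertex cycle `p`. -/
def polyEdge {n : ℕ} (p : ZMod n → Plane) (i : ZMod n) : Set Plane :=
  segment ℝ (p i) (p (i + 1))

/-- The union of the edges of the closed polygon with vertex cycle `p`. -/
def polyBody {n : ℕ} (p : ZMod n → Plane) : Set Plane :=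
  ⋃ i, polyEdge p i

/-- `p` is the vertex cycle of a simple closed `n`-gon: distinct vertices,
consecutive edges meet exactly in their common endpoint, non-consecutive edges
are disjoint. -/
structure IsSimplePolygon {n : ℕ} (p : ZMod n → Plane) : Prop where
  three_le : 3 ≤ n
  inj : Function.Injective p
  consec : ∀ i : ZMod n, polyEdge p i ∩ polyEdge p (i + 1) = {p (i + 1)}
  nonconsec : ∀ i j : ZMod n, j ≠ i → j ≠ i + 1 → i ≠ j + 1 →
    polyEdge p i ∩ polyEdge p j = ∅

/-- The union of the bounded connected components of the complement of `P`
(the Jordan interior of `P`). -/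
def intP (P : Set Plane) : Set Plane :=
  {x | x ∉ P ∧ Bornology.IsBounded (connectedComponentIn Pᶜ x)}

/-- The union of the unbounded connected components of the complement of `P`
(the Jordan exterior of `P`). -/
def extP (P : Set Plane) : Set Plane :=
  {x | x ∉ P ∧ ¬ Bornology.IsBounded (connectedComponentIn Pᶜ x)}

/-- There is a polygonal path of `k` segments from `a` to `b` inside `S`. -/
def PolyPath (S : Set Plane) (a b : Plane) (k : ℕ) : Prop :=
  ∃ x : Fin (k + 1) → Plane, x 0 = a ∧ x (Fin.last k) = b ∧
    ∀ i : Fin k, segment ℝ (x i.castSucc) (x i.succ) ⊆ S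

/-- The minimal number of segments of a polygonal path from `a` to `b` in `S`. -/
noncomputable def polyDist (S : Set Plane) (a b : Plane) : ℕ :=
  sInf {k | PolyPath S a b k}
noncomputable def cross (u v : Plane) : ℝ := u 0 * v 1 - u 1 * v 0
lemma sub_app (u v : Plane) (i : Fin 2) : (u - v) i = u i - v i := rfl
lemma add_app (u v : Plane) (i : Fin 2) : (u + v) i = u i + v i := rfl
lemma smul_app (r : ℝ) (u : Plane) (i : Fin 2) : (r • u) i = r * u i := rfl
noncomputable def X (a u w : Plane) : ℝ := cross (u - a) (w - a)
lemma plane_ext (u v : Plane) (h0 : u 0 = v 0) (h1 : u 1 = v 1) : u = v := by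
  ext j; fin_cases j <;> assumption

lemma X_self (a u : Plane) : X a u u = 0 := by simp only [X, cross, sub_app]; ring
lemma X_left (a w : Plane) : X a a w = 0 := by simp only [X, cross, sub_app]; ring
lemma X_right (a u : Plane) : X a u a = 0 := by simp only [X, cross, sub_app]; ring
lemma X_skew (a u w : Plane) : X a u w = -X a w u := by simp only [X, cross, sub_app]; ring
lemma X_param_right (a w v : Plane) (s : ℝ) : X a w (a + s • (v - a)) = s * X a w v := by
  simp only [X, cross, sub_app, add_app, smul_app]; ring
lemma X_param_left (a w v : Plane) (s : ℝ) : X a (a + s • (v - a)) w = s * X a v w := by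
  simp only [X, cross, sub_app, add_app, smul_app]; ring
lemma X_combo_right (a w y z : Plane) (u : ℝ) :
    X a w (y + u • (z - y)) = (1 - u) * X a w y + u * X a w z := by
  simp only [X, cross, sub_app, add_app, smul_app]; ring
lemma X_combo_left (a w y z : Plane) (u : ℝ) :
    X a (y + u • (z - y)) w = (1 - u) * X a y w + u * X a z w := by
  simp only [X, cross, sub_app, add_app, smul_app]; ring
lemma exists_comp_ne (u : Plane) (h : u ≠ 0) : u 0 ≠ 0 ∨ u 1 ≠ 0 := by
  by_contra hc
  push_neg at hc
  exact h (plane_ext u 0 hc.1 hc.2)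
lemma cross_trans (u w₁ w₂ : Plane) (h1 : cross u w₁ = 0) (h2 : cross u w₂ = 0)
    (hu : u ≠ 0) : cross w₁ w₂ = 0 := by
  rcases exists_comp_ne u hu with h | h
  · have : cross w₁ w₂ * u 0 = cross u w₂ * w₁ 0 - cross u w₁ * w₂ 0 := by
      simp only [cross]; ring
    rw [h1, h2] at this; simpa [h] using this
  · have : cross w₁ w₂ * u 1 = cross u w₂ * w₁ 1 - cross u w₁ * w₂ 1 := by
      simp only [cross]; ring
    rw [h1, h2] at this; simpa [h] using this
lemma exists_scalar (u w : Plane) (h : cross u w = 0) (hw : w ≠ 0) : ∃ t : ℝ, u = t • w := by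
  rcases exists_comp_ne w hw with hc | hc
  · refine ⟨u 0 / w 0, plane_ext _ _ ?_ ?_⟩ <;> simp only [smul_app] <;>
      field_simp <;> simp only [cross] at h <;> linarith
  · refine ⟨u 1 / w 1, plane_ext _ _ ?_ ?_⟩ <;> simp only [smul_app] <;>
      field_simp <;> simp only [cross] at h <;> linarith

lemma cross_skew (u w : Plane) : cross u w = - cross w u := by
  simp only [cross]; ring

lemma Lstar (a c v w z : Plane) :
    X a c v * X a w z = X a z v * X a w c + X a c z * X a w v := by
  simp only [X, cross, sub_app]; ring

lemma isClosed_segment (x y : Plane) : IsClosed (segment ℝ x y) := by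
  rw [segment_eq_image']
  exact (isCompact_Icc.image (by continuity)).isClosed
lemma isClosed_polyBody {n : ℕ} (p : ZMod n → Plane) (hn : 3 ≤ n) :
    IsClosed (polyBody p) := by
  haveI : NeZero n := ⟨by omega⟩
  exact isClosed_iUnion_of_finite fun i => isClosed_segment _ _

lemma cramer (a c v z : Plane) :
    X a c v • (z - a) = X a z v • (c - a) + X a c z • (v - a) := by
  apply plane_ext <;> simp only [X, cross, sub_app, add_app, smul_app] <;> ring

def inTri (a c v z : Plane) : Prop :=
  0 ≤ X a z v * X a c v ∧ 0 ≤ X a c z * X a c v ∧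
    X a z v * X a c v + X a c z * X a c v ≤ X a c v * X a c v

lemma inTri_v (a c v : Plane) : inTri a c v v :=
  ⟨by rw [X_self]; nlinarith [sq_nonneg (X a c v)],
   mul_self_nonneg _, by rw [X_self]; nlinarith⟩

lemma inTri_param (a c v : Plane) (s : ℝ) (h0 : 0 ≤ s) (h1 : s ≤ 1) :
    inTri a c v (a + s • (v - a)) := by
  have e1 : X a (a + s • (v - a)) v = 0 := by
    rw [X_skew, X_param_right, X_self]; ring
  have e2 : X a c (a + s • (v - a)) = s * X a c v := X_param_right ..
  refine ⟨by rw [e1]; simp, by rw [e2]; nlinarith [sq_nonneg (X a c v)], ?_⟩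
  rw [e1, e2]; nlinarith [sq_nonneg (X a c v)]

lemma inTri_elim (a c v z : Plane) (hD : X a c v ≠ 0) (h : inTri a c v z) :
    ∃ s t : ℝ, 0 ≤ s ∧ 0 ≤ t ∧ s + t ≤ 1 ∧
      ∀ w, X a w z = s * X a w c + t * X a w v := by
  obtain ⟨h1, h2, h3⟩ := h
  have hD2 : 0 < X a c v * X a c v := mul_self_pos.mpr hD
  refine ⟨X a z v / X a c v, X a c z / X a c v, ?_, ?_, ?_, ?_⟩
  · rw [div_nonneg_iff]
    rcases lt_trichotomy (X a c v) 0 with h | h | h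
    · right; constructor <;> nlinarith
    · exact absurd h hD
    · left; constructor <;> nlinarith
  · rw [div_nonneg_iff]
    rcases lt_trichotomy (X a c v) 0 with h | h | h
    · right; constructor <;> nlinarith
    · exact absurd h hD
    · left; constructor <;> nlinarith
  · rw [← add_div, div_le_one_iff]
    rcases lt_trichotomy (X a c v) 0 with h | h | h
    · right; right; constructor <;> nlinarith
    · exact absurd h hD
    · left; constructor <;> nlinarith
  · intro w
    have := Lstar a c v w z
    field_simp
    linarith [Lstar a c v w z]

lemma inTri_lift (a c v c' v' z : Plane) (hc' : inTri a c v c') (hv' : inTri a c v v')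
    (hD' : X a c' v' ≠ 0) (hz : inTri a c' v' z) : inTri a c v z := by
  obtain ⟨s, t, hs, ht, hst, hw⟩ := inTri_elim a c' v' z hD' hz
  have e1 : X a z v = s * X a c' v + t * X a v' v := by
    rw [X_skew, hw v, X_skew a v c', X_skew a v v']; ring
  have e2 : X a c z = s * X a c c' + t * X a c v' := hw c
  obtain ⟨a1, a2, a3⟩ := hc'
  obtain ⟨b1, b2, b3⟩ := hv'
  refine ⟨?_, ?_, ?_⟩
  · rw [e1]; nlinarith
  · rw [e2]; nlinarith
  · rw [e1, e2]; nlinarith [sq_nonneg (X a c v)]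

lemma firstHit {P : Set Plane} (hcl : IsClosed P) {a b : Plane} (ha : a ∉ P)
    (hex : ∃ s : ℝ, s ∈ Icc (0:ℝ) 1 ∧ a + s • (b - a) ∈ P) :
    ∃ s₀ : ℝ, 0 < s₀ ∧ s₀ ≤ 1 ∧ a + s₀ • (b - a) ∈ P ∧
      openSegment ℝ a (a + s₀ • (b - a)) ∩ P = ∅ ∧
      ∀ s : ℝ, 0 ≤ s → s < s₀ → a + s • (b - a) ∉ P := by
  set f : ℝ → Plane := fun s => a + s • (b - a) with hf
  have hfc : Continuous f := by
    apply continuous_const.add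
    exact continuous_id.smul continuous_const
  set K := Icc (0:ℝ) 1 ∩ f ⁻¹' P with hK
  have hKc : IsClosed K := isClosed_Icc.inter (hcl.preimage hfc)
  obtain ⟨s₁, hs₁, hs₁P⟩ := hex
  have hne : K.Nonempty := ⟨s₁, hs₁, hs₁P⟩
  have hbdd : BddBelow K := ⟨0, fun x hx => hx.1.1⟩
  have hmem := hKc.csInf_mem hne hbdd
  set s₀ := sInf K with hs₀
  have h0 : 0 ≤ s₀ := hmem.1.1
  have hpos : 0 < s₀ := by
    rcases h0.lt_or_eq with h | h
    · exact h
    · exfalso; apply ha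
      have h2 : a + (0:ℝ) • (b - a) ∈ P := by rw [h]; exact hmem.2
      simpa using h2
  have hmin : ∀ s : ℝ, 0 ≤ s → s < s₀ → a + s • (b - a) ∉ P := by
    intro s h0s hlt hsP
    exact absurd (csInf_le hbdd ⟨⟨h0s, hlt.le.trans hmem.1.2⟩, hsP⟩) (not_le.mpr hlt)
  refine ⟨s₀, hpos, hmem.1.2, hmem.2, ?_, hmin⟩
  rw [openSegment_eq_image', eq_empty_iff_forall_notMem]
  rintro x ⟨⟨θ, hθ, hx⟩, hxP⟩
  have he : x = a + (θ * s₀) • (b - a) := by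
    rw [← hx]
    show a + θ • (a + s₀ • (b - a) - a) = _
    rw [add_sub_cancel_left, smul_smul]
  rw [he] at hxP
  exact hmin (θ * s₀) (by nlinarith [hθ.1, hpos]) (by nlinarith [hθ.2, hpos]) hxP

section Poly
variable {n : ℕ} {p : ZMod n → Plane}

lemma edge_sub (i : ZMod n) : polyEdge p i ⊆ polyBody p := subset_iUnion _ i

lemma vertex_mem (j : ZMod n) : p j ∈ polyBody p := edge_sub j (left_mem_segment ℝ _ _)

lemma edgeInter (hP : IsSimplePolygon p) (i j : ZMod n) (hij : i ≠ j) :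
    ∃ m, polyEdge p i ∩ polyEdge p j ⊆ {p m} := by
  by_cases h1 : j = i + 1
  · exact ⟨i + 1, by rw [h1, hP.consec i]⟩
  · by_cases h2 : i = j + 1
    · refine ⟨j + 1, ?_⟩
      rw [h2, inter_comm, hP.consec j]
    · rw [hP.nonconsec i j (Ne.symm hij) h1 h2]
      exact ⟨i, empty_subset _⟩

lemma one_ne_zero'' (hn : 3 ≤ n) : (1 : ZMod n) ≠ 0 := by
  haveI : Fact (1 < n) := ⟨by omega⟩
  exact one_ne_zero

lemma mem_segment_param (x u : Plane) (t1 t2 s : ℝ) (h1 : t1 ≤ s) (h2 : s ≤ t2) :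
    x + s • u ∈ segment ℝ (x + t1 • u) (x + t2 • u) := by
  rcases eq_or_lt_of_le (h1.trans h2) with h | h
  · have hs : s = t1 := le_antisymm (h ▸ h2) h1
    rw [hs]; exact left_mem_segment ℝ _ _
  · rw [segment_eq_image']
    refine ⟨(s - t1)/(t2 - t1), ⟨div_nonneg (by linarith) (by linarith),
      by rw [div_le_one (by linarith)]; linarith⟩, ?_⟩
    have hne : t2 - t1 ≠ 0 := ne_of_gt (by linarith)
    apply plane_ext <;> simp only [add_app, sub_app, smul_app] <;>
      field_simp [hne] <;> ring

lemma not_collinear (hP : IsSimplePolygon p) (a : Plane) (ha : a ∉ polyBody p) :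
    ∃ j, X a (p j) (p (j + 1)) ≠ 0 := by
  haveI : NeZero n := ⟨by have := hP.three_le; omega⟩
  by_contra hc
  push_neg at hc
  have hne : ∀ j, p j - a ≠ 0 := by
    intro j h
    rw [sub_eq_zero] at h
    exact ha (h ▸ vertex_mem j)
  have key : ∀ m : ℕ, cross (p 0 - a) (p (m : ZMod n) - a) = 0 := by
    intro m
    induction m with
    | zero => simp [cross]; ring
    | succ k ih =>
      have h2 : cross (p (k : ZMod n) - a) (p ((k : ZMod n) + 1) - a) = 0 := hc _
      have : ((k + 1 : ℕ) : ZMod n) = (k : ZMod n) + 1 := by push_cast; ring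
      rw [this]
      exact cross_trans _ _ _ (by rw [cross_skew, ih]; ring) h2 (hne _)
  have hpar : ∀ j : ZMod n, cross (p 0 - a) (p j - a) = 0 := by
    intro j
    have := key j.val
    rwa [ZMod.natCast_rightInverse j] at this
  set u := p 0 - a with hu
  have ht : ∀ j : ZMod n, ∃ t : ℝ, p j - a = t • u := by
    intro j
    exact exists_scalar _ _ (by rw [cross_skew, hpar j]; ring) (hne 0)
  choose t htt using ht
  have hpt : ∀ j, p j = a + t j • u := by
    intro j; rw [← htt j]; abel
  have htinj : ∀ j k : ZMod n, t j = t k → j = k := by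
    intro j k h
    apply hP.inj
    rw [hpt j, hpt k, h]
  obtain ⟨j₀, _, hmin⟩ := Finset.exists_min_image Finset.univ t ⟨0, Finset.mem_univ 0⟩
  have h1 : (1 : ZMod n) ≠ 0 := one_ne_zero'' hP.three_le
  have hno1 : j₀ - 1 ≠ j₀ := fun h => h1 (sub_eq_self.mp h)
  have hno2 : j₀ + 1 ≠ j₀ := fun h => h1 (add_eq_left.mp h)
  have hlt1 : t j₀ < t (j₀ - 1) := by
    rcases lt_or_eq_of_le (hmin _ (Finset.mem_univ (j₀ - 1))) with h | h
    · exact h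
    · exact absurd (htinj _ _ h.symm) hno1
  have hlt2 : t j₀ < t (j₀ + 1) := by
    rcases lt_or_eq_of_le (hmin _ (Finset.mem_univ (j₀ + 1))) with h | h
    · exact h
    · exact absurd (htinj _ _ h.symm) hno2
  set s := min (t (j₀ - 1)) (t (j₀ + 1)) with hsdef
  have hs : t j₀ < s := lt_min hlt1 hlt2
  have e : j₀ - 1 + 1 = j₀ := by ring
  have hz1 : a + s • u ∈ polyEdge p (j₀ - 1) := by
    rw [polyEdge, e, hpt (j₀ - 1), hpt j₀, segment_symm]
    exact mem_segment_param a u _ _ s hs.le (min_le_left _ _)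
  have hz2 : a + s • u ∈ polyEdge p j₀ := by
    rw [polyEdge, hpt j₀, hpt (j₀ + 1)]
    exact mem_segment_param a u _ _ s hs.le (min_le_right _ _)
  have hcon := hP.consec (j₀ - 1)
  rw [e] at hcon
  have hzz : a + s • u ∈ ({p j₀} : Set Plane) := hcon ▸ ⟨hz1, hz2⟩
  rw [mem_singleton_iff, hpt j₀] at hzz
  have h2 : (s - t j₀) • u = 0 := by
    rw [sub_smul, sub_eq_zero]
    exact add_left_cancel hzz
  rcases smul_eq_zero.mp h2 with h | h
  · rw [sub_eq_zero] at h
    exact absurd h (ne_of_gt hs)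
  · exact hne 0 h
end Poly

-- additional small helpers
lemma cross_smul_smul (α β : ℝ) (u v : Plane) :
    cross (α • u) (β • v) = α * β * cross u v := by
  simp only [cross, smul_app]; ring

lemma mem_segment_param' (x u : Plane) (t1 t2 s : ℝ) (h1 : min t1 t2 ≤ s)
    (h2 : s ≤ max t1 t2) : x + s • u ∈ segment ℝ (x + t1 • u) (x + t2 • u) := by
  rcases le_total t1 t2 with h | h
  · rw [min_eq_left h] at h1; rw [max_eq_right h] at h2
    exact mem_segment_param x u t1 t2 s h1 h2
  · rw [min_eq_right h] at h1; rw [max_eq_left h] at h2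
    rw [segment_symm]
    exact mem_segment_param x u t2 t1 s h1 h2

lemma smul_cancel {D : ℝ} (hD : D ≠ 0) {r : ℝ} {u w : Plane} (h : D • u = r • w) :
    u = (r / D) • w := by
  have := congrArg (fun z => D⁻¹ • z) h
  simpa [smul_smul, inv_mul_cancel₀ hD, div_eq_inv_mul] using this

noncomputable def exitP (Fc Fv : ℝ) : ℝ := if 0 ≤ Fv then 1 else Fc / (Fc - Fv)

lemma exitP_pos {Fc : ℝ} (Fv : ℝ) (h : 0 < Fc) : 0 < exitP Fc Fv := by
  unfold exitP; split
  · norm_num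
  · exact div_pos h (by push_neg at *; linarith)

lemma exitP_le_one {Fc : ℝ} (Fv : ℝ) (h : 0 < Fc) : exitP Fc Fv ≤ 1 := by
  unfold exitP; split
  · exact le_refl 1
  · push_neg at *
    rename_i hFv
    rw [div_le_one (by linarith)]
    linarith

lemma exitP_nonneg_at {Fc Fv : ℝ} (h : 0 < Fc) {u : ℝ} (h0 : 0 ≤ u) (h1 : u ≤ 1)
    (hu : u ≤ exitP Fc Fv) : 0 ≤ (1 - u) * Fc + u * Fv := by
  unfold exitP at hu; split at hu
  · nlinarith
  · push_neg at *
    rename_i hFv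
    rw [le_div_iff₀ (by linarith)] at hu
    nlinarith

lemma exitP_root {Fc Fv : ℝ} (h : 0 < Fc) (hv : Fv < 0) :
    (1 - exitP Fc Fv) * Fc + exitP Fc Fv * Fv = 0 ∧ exitP Fc Fv < 1 := by
  rw [exitP, if_neg (not_le.mpr hv)]
  have hne : Fc - Fv ≠ 0 := ne_of_gt (by linarith)
  constructor
  · field_simp
    ring
  · rw [div_lt_one (by linarith)]; linarith

lemma div_nonneg_of_mul {A B : ℝ} (hB : B ≠ 0) (h : 0 ≤ A * B) : 0 ≤ A / B := by
  have he : A / B = (A * B) / (B * B) := by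
    rw [mul_div_mul_right A B hB]
  rw [he]
  exact div_nonneg h (mul_self_nonneg B)

lemma div_le_one_of_mul {A B : ℝ} (hB : B ≠ 0) (h : A * B ≤ B * B) : A / B ≤ 1 := by
  have he : A / B = (A * B) / (B * B) := by
    rw [mul_div_mul_right A B hB]
  rw [he]
  exact (div_le_one (mul_self_pos.mpr hB)).mpr h

lemma smul_param_inj {v a : Plane} (h : v - a ≠ 0) {s t : ℝ}
    (heq : a + s • (v - a) = a + t • (v - a)) : s = t := by
  have h2 := add_left_cancel heq
  have h3 : (s - t) • (v - a) = 0 := by rw [sub_smul, h2, sub_self]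
  rcases smul_eq_zero.mp h3 with h4 | h4
  · have := sub_eq_zero.mp h4; linarith
  · exact absurd h4 h

set_option maxHeartbeats 3000000 in
lemma core {n : ℕ} {p : ZMod n → Plane} (hP : IsSimplePolygon p) (a : Plane)
    (ha : a ∉ polyBody p) :
    ∀ N : ℕ, ∀ (c v : Plane) (i k : ZMod n),
      {j : ZMod n | inTri a c v (p j)}.ncard ≤ N →
      c ∈ polyEdge p i → v ∈ polyEdge p i → v = p k →
      (∀ m, c ≠ p m) →
      openSegment ℝ a c ∩ polyBody p = ∅ →
      X a c v ≠ 0 →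
      ∃ jj : ZMod n, inTri a c v (p jj) ∧ openSegment ℝ a (p jj) ∩ polyBody p = ∅ := by
  haveI : NeZero n := ⟨by have := hP.three_le; omega⟩
  intro N
  induction N with
  | zero =>
    intro c v i k hcard hc hv hk hcnv hfree hD
    exfalso
    have hkmem : k ∈ {j : ZMod n | inTri a c v (p j)} := by
      rw [mem_setOf_eq, ← hk]; exact inTri_v a c v
    have hempty := (Set.ncard_eq_zero (Set.toFinite _)).mp (Nat.le_zero.mp hcard)
    rw [hempty] at hkmem
    exact hkmem
  | succ N ih =>
    intro c v i k hcard hc hv hk hcnv hfree hD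
    by_cases hvis : openSegment ℝ a v ∩ polyBody p = ∅
    · exact ⟨k, by rw [← hk]; exact inTri_v a c v, by rw [← hk]; exact hvis⟩
    obtain ⟨z, hz1, hz2⟩ := nonempty_iff_ne_empty.mpr hvis
    rw [openSegment_eq_image'] at hz1
    obtain ⟨s1, hs1, hzz⟩ := hz1
    have hz2' : a + s1 • (v - a) ∈ polyBody p := by rw [← hzz] at hz2; exact hz2
    have hPcl : IsClosed (polyBody p) := isClosed_polyBody p hP.three_le
    obtain ⟨s₀, hs₀pos, hs₀le, hs₀P, hs₀free, hs₀min⟩ :=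
      firstHit hPcl ha ⟨s1, ⟨hs1.1.le, hs1.2.le⟩, hz2'⟩
    set c' := a + s₀ • (v - a) with hc'def
    have hs₀lt : s₀ < 1 := by
      rcases lt_or_eq_of_le hs₀le with h | h
      · exact h
      · exact absurd hz2' (hs₀min s1 hs1.1.le (by rw [h]; exact hs1.2))
    have hvne : v - a ≠ 0 := by
      intro h
      rw [sub_eq_zero] at h
      apply ha
      rw [← h, hk]
      exact vertex_mem k
    rw [polyBody, mem_iUnion] at hs₀P
    obtain ⟨j, hc'mem⟩ := hs₀P
    -- the edge of c' is not edge i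
    have hji : j ≠ i := by
      intro hji0
      rw [hji0] at hc'mem
      apply hD
      have hcp := hc; have hvp := hv; have hc'p := hc'mem
      rw [polyEdge, segment_eq_image'] at hcp hvp hc'p
      obtain ⟨θc, hθc, hceq0⟩ := hcp
      obtain ⟨θv, hθv, hveq0⟩ := hvp
      obtain ⟨θ', hθ', hc'eq0⟩ := hc'p
      have hceq : p i + θc • (p (i+1) - p i) = c := hceq0
      have hveq : p i + θv • (p (i+1) - p i) = v := hveq0
      have hc'eq : p i + θ' • (p (i+1) - p i) = a + s₀ • (v - a) := hc'eq0
      set w := p (i+1) - p i with hw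
      have hA : (1 - s₀) • (c - a) = ((1-s₀)*θc - θ' + s₀*θv) • w := by
        apply plane_ext <;>
        · simp only [smul_app, sub_app]
          have e1 := congrArg (fun z : Plane => z 0) hceq; have e1' := congrArg (fun z : Plane => z 1) hceq
          have e2 := congrArg (fun z : Plane => z 0) hveq; have e2' := congrArg (fun z : Plane => z 1) hveq
          have e3 := congrArg (fun z : Plane => z 0) hc'eq; have e3' := congrArg (fun z : Plane => z 1) hc'eq
          simp only [add_app, smul_app, sub_app] at e1 e1' e2 e2' e3 e3'
          first
          | linear_combination (-(1 - s₀)) * e1 + e3 - s₀ * e2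
          | linear_combination (-(1 - s₀)) * e1' + e3' - s₀ * e2'
      have hB : (1 - s₀) • (v - a) = (θv - θ') • w := by
        apply plane_ext <;>
        · simp only [smul_app, sub_app]
          have e2 := congrArg (fun z : Plane => z 0) hveq; have e2' := congrArg (fun z : Plane => z 1) hveq
          have e3 := congrArg (fun z : Plane => z 0) hc'eq; have e3' := congrArg (fun z : Plane => z 1) hc'eq
          simp only [add_app, smul_app, sub_app] at e2 e2' e3 e3'
          first
          | linear_combination -e2 + e3
          | linear_combination -e2' + e3'
      have hcs := cross_smul_smul (1 - s₀) (1 - s₀) (c - a) (v - a)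
      rw [hA, hB, cross_smul_smul] at hcs
      have hww : cross w w = 0 := by simp only [cross]; ring
      rw [hww] at hcs
      have h1s : (1 - s₀) * (1 - s₀) ≠ 0 := by
        apply mul_ne_zero <;> [skip; skip] <;> exact ne_of_gt (by linarith)
      have : (1 - s₀) * (1 - s₀) * cross (c - a) (v - a) = 0 := by linarith [hcs]
      have h2 := (mul_eq_zero.mp this).resolve_left h1s
      exact h2
    -- parameter of c' on edge j
    have hc'par := hc'mem
    rw [polyEdge, segment_eq_image'] at hc'par
    obtain ⟨θ₀, hθ₀, hc'eqr⟩ := hc'par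
    have hGc' : X a c' v = 0 := by rw [hc'def, X_param_left, X_self, mul_zero]
    by_cases hc'vert : ∃ m, c' = p m
    · obtain ⟨m, hm⟩ := hc'vert
      refine ⟨m, ?_, ?_⟩
      · rw [← hm, hc'def]; exact inTri_param a c v s₀ hs₀pos.le hs₀lt.le
      · rw [← hm]; exact hs₀free
    push_neg at hc'vert
    set x := p j with hxdef
    set y := p (j+1) with hydef
    have hc'eq : x + θ₀ • (y - x) = c' := hc'eqr
    have hxyne : x ≠ y := by
      intro h
      have h2 := hP.inj h
      exact one_ne_zero'' hP.three_le (left_eq_add.mp h2)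
    have hGcomb : (1 - θ₀) * X a x v + θ₀ * X a y v = 0 := by
      rw [← X_combo_left a v x y θ₀, hc'eq, hGc']
    have hθne0 : θ₀ ≠ 0 := by
      intro h0
      apply hc'vert j
      rw [← hc'eq, h0, ← hxdef]
      simp
    have hθne1 : θ₀ ≠ 1 := by
      intro h1
      apply hc'vert (j+1)
      rw [← hc'eq, h1, one_smul, ← hydef]
      abel
    have hbz : ¬ (X a x v = 0 ∧ X a y v = 0) := by
      rintro ⟨hgx, hgy⟩
      obtain ⟨tx, htx⟩ := exists_scalar (x - a) (v - a) hgx hvne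
      obtain ⟨ty, hty⟩ := exists_scalar (y - a) (v - a) hgy hvne
      have hxe : x = a + tx • (v - a) := by rw [← htx]; abel
      have hye : y = a + ty • (v - a) := by rw [← hty]; abel
      have htxty : tx ≠ ty := fun h => hxyne (by rw [hxe, hye, h])
      have hs₀eq : s₀ = tx + θ₀ * (ty - tx) := by
        apply smul_param_inj hvne
        rw [← hc'def, ← hc'eq, hxe, hye]
        apply plane_ext <;> simp only [add_app, smul_app, sub_app] <;> ring
      rcases le_or_gt (min tx ty) 0 with hm0 | hm0
      · have hmax : (0:ℝ) ≤ max tx ty := by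
          rcases le_total tx ty with h | h
          · rw [max_eq_right h]
            rw [min_eq_left h] at hm0
            linarith [mul_nonneg (sub_nonneg.mpr hθ₀.2) (sub_nonneg.mpr h)]
          · rw [max_eq_left h]
            rw [min_eq_right h] at hm0
            linarith [mul_nonneg hθ₀.1 (sub_nonneg.mpr h)]
        have haseg : a ∈ segment ℝ x y := by
          rw [hxe, hye]
          have h0 := mem_segment_param' a (v - a) tx ty 0 hm0 hmax
          simpa using h0
        exact ha (edge_sub j haseg)
      · have hmle : min tx ty ≤ s₀ := by
          rw [hs₀eq]
          rcases le_total tx ty with h | h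
          · rw [min_eq_left h]; linarith [mul_nonneg hθ₀.1 (sub_nonneg.mpr h)]
          · rw [min_eq_right h]; linarith [mul_nonneg (sub_nonneg.mpr hθ₀.2) (sub_nonneg.mpr h)]
        rcases lt_or_eq_of_le hmle with hlt | heq2
        · have hzP : a + (min tx ty) • (v - a) ∈ polyBody p := by
            rcases le_total tx ty with h | h
            · rw [min_eq_left h, ← hxe, hxdef]; exact vertex_mem j
            · rw [min_eq_right h, ← hye, hydef]; exact vertex_mem (j+1)
          have hzO : a + (min tx ty) • (v - a) ∈ openSegment ℝ a c' := by
            rw [openSegment_eq_image']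
            refine ⟨min tx ty / s₀, ⟨div_pos hm0 hs₀pos, (div_lt_one hs₀pos).mpr hlt⟩, ?_⟩
            show a + (min tx ty / s₀) • (c' - a) = _
            rw [hc'def, add_sub_cancel_left, smul_smul, div_mul_cancel₀ _ (ne_of_gt hs₀pos)]
          exact (eq_empty_iff_forall_notMem.mp hs₀free _) ⟨hzO, hzP⟩
        · rcases le_total tx ty with h | h
          · apply hc'vert j
            rw [hc'def, ← heq2, min_eq_left h, ← hxe, hxdef]
          · apply hc'vert (j+1)
            rw [hc'def, ← heq2, min_eq_right h, ← hye, hydef]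
    have hGx : X a x v ≠ 0 := by
      intro h
      apply hbz
      refine ⟨h, ?_⟩
      have h2 : θ₀ * X a y v = 0 := by rw [h] at hGcomb; linarith
      exact (mul_eq_zero.mp h2).resolve_left hθne0
    have hGy : X a y v ≠ 0 := by
      intro h
      apply hbz
      refine ⟨?_, h⟩
      have h2 : (1 - θ₀) * X a x v = 0 := by rw [h] at hGcomb; linarith
      exact (mul_eq_zero.mp h2).resolve_left (sub_ne_zero.mpr (Ne.symm hθne1))
    have hθ0lt : 0 < θ₀ := lt_of_le_of_ne hθ₀.1 (Ne.symm hθne0)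
    have hθ1lt : θ₀ < 1 := lt_of_le_of_ne hθ₀.2 hθne1
    have hprod : X a x v * X a y v < 0 := by
      rcases lt_trichotomy (X a x v) 0 with h | h | h
      · have h2 : 0 < X a y v := by nlinarith [hGcomb, mul_neg_of_pos_of_neg (sub_pos.mpr hθ1lt) h]
        exact mul_neg_of_neg_of_pos h h2
      · exact absurd h hGx
      · have h2 : X a y v < 0 := by nlinarith [hGcomb, mul_pos (sub_pos.mpr hθ1lt) h]
        exact mul_neg_of_pos_of_neg h h2
    have hDsq : 0 < X a c v * X a c v := mul_self_pos.mpr hD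
    have hsel : ∃ k' : ZMod n, p k' ∈ polyEdge p j ∧ 0 < X a (p k') v * X a c v := by
      rcases lt_trichotomy (X a x v * X a c v) 0 with h | h | h
      · refine ⟨j + 1, right_mem_segment ℝ _ _, ?_⟩
        rw [← hydef]
        rcases (mul_ne_zero hGy hD).lt_or_gt with hneg | hpos
        · exfalso
          linarith [mul_pos_of_neg_of_neg h hneg, mul_neg_of_neg_of_pos hprod hDsq]
        · exact hpos
      · exact absurd ((mul_eq_zero.mp h).resolve_right hD) hGx
      · refine ⟨j, left_mem_segment ℝ _ _, ?_⟩
        rw [← hxdef]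
        exact h
    obtain ⟨k', hv'edge, hF1v'⟩ := hsel
    set v' := p k' with hv'def
    have hXc'v' : X a c' v' = s₀ * X a v v' := by rw [hc'def, X_param_left]
    have hGv' : X a v' v ≠ 0 := by
      intro h
      rw [h, zero_mul] at hF1v'
      exact lt_irrefl 0 hF1v'
    have hD' : X a c' v' ≠ 0 := by
      rw [hXc'v']
      apply mul_ne_zero (ne_of_gt hs₀pos)
      rw [X_skew]
      simpa using hGv'
    have hc'T : inTri a c v c' := by
      rw [hc'def]; exact inTri_param a c v s₀ hs₀pos.le hs₀lt.le
    have hmain : ∃ (vnew : Plane) (knew : ZMod n), vnew = p knew ∧ inTri a c v vnew ∧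
        vnew ∈ polyEdge p j ∧ X a vnew v ≠ 0 ∧ X a c' vnew ≠ 0 := by
      by_cases hv'T : inTri a c v v'
      · exact ⟨v', k', rfl, hv'T, hv'edge, hGv', hD'⟩
      · have heAcc : X a c c' = s₀ * X a c v := by rw [hc'def, X_param_right]
        have hF2c'pos : 0 < X a c c' * X a c v := by
          rw [heAcc]
          have h9 := mul_pos hs₀pos hDsq
          linarith
        have hF3c'pos : 0 < X a c v * X a c v - X a c' v * X a c v - X a c c' * X a c v := by
          rw [heAcc, hGc', zero_mul]
          have h9 := mul_pos (show (0:ℝ) < 1 - s₀ by linarith) hDsq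
          linarith
        set e2 := exitP (X a c c' * X a c v) (X a c v' * X a c v) with he2
        set e3 := exitP (X a c v * X a c v - X a c' v * X a c v - X a c c' * X a c v)
          (X a c v * X a c v - X a v' v * X a c v - X a c v' * X a c v) with he3
        set u := min e2 e3 with hu
        have hupos : 0 < u := lt_min (exitP_pos _ hF2c'pos) (exitP_pos _ hF3c'pos)
        have hule : u ≤ 1 := le_trans (min_le_left _ _) (exitP_le_one _ hF2c'pos)
        have hult : u < 1 := by
          by_cases h2 : 0 ≤ X a c v' * X a c v
          · have h3 : X a c v * X a c v - X a v' v * X a c v - X a c v' * X a c v < 0 := by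
              by_contra hcc
              push_neg at hcc
              exact hv'T ⟨le_of_lt hF1v', h2, by linarith⟩
            calc u ≤ e3 := min_le_right _ _
              _ < 1 := (exitP_root hF3c'pos h3).2
          · push_neg at h2
            calc u ≤ e2 := min_le_left _ _
              _ < 1 := (exitP_root hF2c'pos h2).2
        set zst := c' + u • (v' - c') with hzst
        have hXz1 : X a zst v = u * X a v' v := by
          rw [hzst, X_combo_left, hGc']; ring
        have hXz2 : X a c zst = (1 - u) * X a c c' + u * X a c v' :=
          X_combo_right a c c' v' u
        have hzT : inTri a c v zst := by
          refine ⟨?_, ?_, ?_⟩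
          · rw [hXz1]
            linarith [mul_nonneg hupos.le hF1v'.le]
          · rw [hXz2]
            have h2 := exitP_nonneg_at hF2c'pos hupos.le hule (min_le_left _ _)
            linarith [h2]
          · rw [hXz1, hXz2]
            have h3 := exitP_nonneg_at hF3c'pos hupos.le hule (min_le_right _ _)
            rw [hGc'] at h3
            linarith [h3]
        have hzsegcv : zst ∈ segment ℝ c' v' := by
          rw [segment_eq_image']
          exact ⟨u, ⟨hupos.le, hule⟩, rfl⟩
        have hzedgej : zst ∈ polyEdge p j :=
          (convex_segment (p j) (p (j+1))).segment_subset hc'mem hv'edge hzsegcv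
        have hXc'z : X a c' zst = u * X a c' v' := by
          rw [hzst, X_combo_right, X_self]; ring
        rcases min_cases e2 e3 with ⟨hmin0, _⟩ | ⟨hmin0, _⟩
        · -- u = e2 : the segment exits through the wall [a,c]: contradiction
          exfalso
          have hmin1 : u = e2 := hu.trans hmin0
          have hF2vneg : X a c v' * X a c v < 0 := by
            by_contra hcc
            push_neg at hcc
            have h9 : u = (1:ℝ) := by
              rw [hmin1, he2]
              simp only [exitP, if_pos hcc]
            exact absurd h9 (ne_of_lt hult)
          have hroot := (exitP_root hF2c'pos hF2vneg).1
          rw [← he2, ← hmin1] at hroot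
          have hF2z : X a c zst * X a c v = 0 := by
            rw [hXz2]
            linarith [hroot]
          have hXcz : X a c zst = 0 := (mul_eq_zero.mp hF2z).resolve_right hD
          have hcr := cramer a c v zst
          rw [hXcz, zero_smul, add_zero] at hcr
          have hrep := smul_cancel hD hcr
          set β := X a zst v / X a c v with hβdef
          have hrep2 : zst = a + β • (c - a) := by rw [← hrep]; abel
          have hβ0 : 0 ≤ β := div_nonneg_of_mul hD hzT.1
          have hβ1 : β ≤ 1 := by
            apply div_le_one_of_mul hD
            have h3 := hzT.2.2
            rw [hXcz, zero_mul] at h3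
            linarith
          have hzstP : zst ∈ polyBody p := edge_sub j hzedgej
          rcases eq_or_lt_of_le hβ0 with hb0 | hbpos
          · have hza : zst = a := by rw [hrep2, ← hb0]; simp
            exact ha (hza ▸ hzstP)
          · rcases eq_or_lt_of_le hβ1 with hb1 | hblt
            · have hzc : zst = c := by rw [hrep2, hb1, one_smul]; abel
              obtain ⟨m, hm⟩ := edgeInter hP i j (Ne.symm hji)
              have hcm : c ∈ ({p m} : Set Plane) := hm ⟨hc, hzc ▸ hzedgej⟩
              exact hcnv m (mem_singleton_iff.mp hcm)
            · have hzO : zst ∈ openSegment ℝ a c := by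
                rw [openSegment_eq_image']
                exact ⟨β, ⟨hbpos, hblt⟩, hrep2.symm⟩
              exact (eq_empty_iff_forall_notMem.mp hfree zst) ⟨hzO, hzstP⟩
        · -- u = e3 : zst is a vertex on the wall [c,v]
          have hmin1 : u = e3 := hu.trans hmin0
          have hF3vneg : X a c v * X a c v - X a v' v * X a c v - X a c v' * X a c v < 0 := by
            by_contra hcc
            push_neg at hcc
            have h9 : u = (1:ℝ) := by
              rw [hmin1, he3]
              simp only [exitP, if_pos hcc]
            exact absurd h9 (ne_of_lt hult)
          have hroot := (exitP_root hF3c'pos hF3vneg).1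
          rw [← he3, ← hmin1] at hroot
          have hsum : X a zst v * X a c v + X a c zst * X a c v = X a c v * X a c v := by
            rw [hGc', zero_mul] at hroot
            rw [hXz1, hXz2]
            linarith [hroot]
          have hsum2 : X a zst v + X a c zst = X a c v := by
            have h4 : (X a zst v + X a c zst - X a c v) * X a c v = 0 := by linarith [hsum]
            have h5 := (mul_eq_zero.mp h4).resolve_right hD
            linarith
          set β := X a zst v / X a c v with hβdef
          set γ := X a c zst / X a c v with hγdef
          have hβγ : β + γ = 1 := by
            rw [hβdef, hγdef, ← add_div, hsum2, div_self hD]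
          have hβ0 : 0 ≤ β := div_nonneg_of_mul hD hzT.1
          have hγ0 : 0 ≤ γ := div_nonneg_of_mul hD hzT.2.1
          have hcr := cramer a c v zst
          have hrep : zst - a = β • (c - a) + γ • (v - a) := by
            calc zst - a = (X a c v)⁻¹ • (X a c v • (zst - a)) := (inv_smul_smul₀ hD _).symm
              _ = (X a c v)⁻¹ • (X a zst v • (c - a) + X a c zst • (v - a)) := by rw [hcr]
              _ = β • (c - a) + γ • (v - a) := by
                  rw [smul_add, smul_smul, smul_smul, hβdef, hγdef,
                    div_eq_inv_mul, div_eq_inv_mul]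
          have hzcomb : zst = β • c + γ • v := by
            apply plane_ext <;>
            · have e0 := congrArg (fun z : Plane => z 0) hrep; have e1 := congrArg (fun z : Plane => z 1) hrep
              simp only [add_app, smul_app, sub_app] at e0 e1
              simp only [add_app, smul_app]
              first
              | linear_combination e0 - (a 0) * hβγ
              | linear_combination e1 - (a 1) * hβγ
          have hzseg : zst ∈ segment ℝ c v := ⟨β, γ, hβ0, hγ0, hβγ, hzcomb.symm⟩
          have hzedgei : zst ∈ polyEdge p i :=
            (convex_segment (p i) (p (i+1))).segment_subset hc hv hzseg
          obtain ⟨m, hm⟩ := edgeInter hP i j (Ne.symm hji)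
          have hzm : zst = p m := mem_singleton_iff.mp (hm ⟨hzedgei, hzedgej⟩)
          refine ⟨zst, m, hzm, hzT, hzedgej, ?_, ?_⟩
          · rw [hXz1]; exact mul_ne_zero (ne_of_gt hupos) hGv'
          · rw [hXc'z]; exact mul_ne_zero (ne_of_gt hupos) hD'
    obtain ⟨vnew, knew, hknew, hvnewT, hvnewEdge, hGvnew, hD'new⟩ := hmain
    have hsub : {jj : ZMod n | inTri a c' vnew (p jj)} ⊆ {jj : ZMod n | inTri a c v (p jj)} :=
      fun jj hjj => inTri_lift a c v c' vnew (p jj) hc'T hvnewT hD'new hjj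
    have hknot : ¬ inTri a c' vnew v := by
      intro hcon
      obtain ⟨s, t, hs, ht, hst, hw⟩ := inTri_elim a c' vnew v hD'new hcon
      have h1 := hw v
      rw [X_self] at h1
      have h2 : X a v c' = 0 := by rw [hc'def, X_param_right, X_self, mul_zero]
      rw [h2, mul_zero] at h1
      have ht0 : t = 0 := by
        have h3 : X a v vnew ≠ 0 := by rw [X_skew]; simpa using hGvnew
        have h4 : t * X a v vnew = 0 := by linarith
        exact (mul_eq_zero.mp h4).resolve_right h3
      have h4 := hw c
      rw [ht0, zero_mul, add_zero] at h4
      have h5 : X a c c' = s₀ * X a c v := by rw [hc'def, X_param_right]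
      rw [h5] at h4
      have h6 : (1 - s * s₀) * X a c v = 0 := by linarith [h4]
      have h7 := (mul_eq_zero.mp h6).resolve_right hD
      have hs1 : s ≤ 1 := by linarith
      have h8 := mul_le_mul_of_nonneg_right hs1 hs₀pos.le
      rw [one_mul] at h8
      linarith
    have hklt : {jj : ZMod n | inTri a c' vnew (p jj)}.ncard ≤ N := by
      have hss : {jj : ZMod n | inTri a c' vnew (p jj)} ⊂ {jj : ZMod n | inTri a c v (p jj)} := by
        refine ⟨hsub, fun hback => ?_⟩
        have hk1 : k ∈ {jj : ZMod n | inTri a c v (p jj)} := by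
          rw [mem_setOf_eq, ← hk]; exact inTri_v a c v
        have hk2 := hback hk1
        rw [mem_setOf_eq, ← hk] at hk2
        exact hknot hk2
      have := Set.ncard_lt_ncard hss (Set.toFinite _)
      omega
    obtain ⟨jj, hjj1, hjj2⟩ :=
      ih c' vnew j knew hklt hc'mem hvnewEdge hknew hc'vert hs₀free hD'new
    exact ⟨jj, inTri_lift a c v c' vnew (p jj) hc'T hvnewT hD'new hjj1, hjj2⟩


theorem stmt7 {n : ℕ} (p : ZMod n → Plane) (hP : IsSimplePolygon p)
    (a : Plane) (ha : a ∉ polyBody p) :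
    ∃ i j : ZMod n, p i ≠ p j ∧
      openSegment ℝ a (p i) ∩ polyBody p = ∅ ∧
      openSegment ℝ a (p j) ∩ polyBody p = ∅ := by
  haveI : NeZero n := ⟨by have := hP.three_le; omega⟩
  obtain ⟨j₀, hj₀⟩ := not_collinear hP a ha
  have hvne : ∀ jj : ZMod n, p jj - a ≠ 0 := by
    intro jj h
    rw [sub_eq_zero] at h
    exact ha (h ▸ vertex_mem jj)
  have hroots : ∀ jj : ZMod n, ∃ t0 : ℝ,
      ∀ t : ℝ, cross (p jj - a) ((p j₀ + t • (p (j₀+1) - p j₀)) - a) = 0 → t = t0 := by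
    intro jj
    have hform : ∀ t : ℝ, cross (p jj - a) ((p j₀ + t • (p (j₀+1) - p j₀)) - a) =
        cross (p jj - a) (p j₀ - a) + t * cross (p jj - a) (p (j₀+1) - p j₀) := by
      intro t; simp only [cross, add_app, smul_app, sub_app]; ring
    have hAB : ¬(cross (p jj - a) (p j₀ - a) = 0 ∧ cross (p jj - a) (p (j₀+1) - p j₀) = 0) := by
      rintro ⟨hA0, hB0⟩
      have hY : cross (p jj - a) (p (j₀+1) - a) = 0 := by
        have he : cross (p jj - a) (p (j₀+1) - a) =
            cross (p jj - a) (p j₀ - a) + cross (p jj - a) (p (j₀+1) - p j₀) := by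
          simp only [cross, sub_app]; ring
        rw [he, hA0, hB0, add_zero]
      exact hj₀ (cross_trans (p jj - a) (p j₀ - a) (p (j₀+1) - a) hA0 hY (hvne jj))
    by_cases hB0 : cross (p jj - a) (p (j₀+1) - p j₀) = 0
    · refine ⟨0, fun t ht => ?_⟩
      rw [hform, hB0] at ht
      exact absurd ⟨by linarith, hB0⟩ hAB
    · refine ⟨-(cross (p jj - a) (p j₀ - a)) / cross (p jj - a) (p (j₀+1) - p j₀),
        fun t ht => ?_⟩
      rw [hform] at ht
      field_simp
      linarith
  choose t0 ht0 using hroots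
  have hinf : (Ioo (0:ℝ) 1 \ range t0).Infinite :=
    (Set.infinite_coe_iff.mp (Set.Ioo.infinite (by norm_num : (0:ℝ) < 1))).diff
      (Set.finite_range t0)
  obtain ⟨tq, htq⟩ := hinf.nonempty
  set q := p j₀ + tq • (p (j₀+1) - p j₀) with hqdef
  have hqP : q ∈ polyBody p := by
    apply edge_sub j₀
    rw [polyEdge, segment_eq_image']
    exact ⟨tq, ⟨htq.1.1.le, htq.1.2.le⟩, rfl⟩
  have hgen : ∀ jj : ZMod n, cross (p jj - a) (q - a) ≠ 0 := by
    intro jj h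
    exact htq.2 ⟨jj, (ht0 jj tq h).symm⟩
  have hone : a + (1:ℝ) • (q - a) = q := by rw [one_smul]; abel
  obtain ⟨s₀, hs₀pos, hs₀le, hs₀P, hs₀free, hs₀min⟩ :=
    firstHit (isClosed_polyBody p hP.three_le) ha
      ⟨1, ⟨zero_le_one, le_refl 1⟩, by rw [hone]; exact hqP⟩
  set c2 := a + s₀ • (q - a) with hc2def
  rw [polyBody, mem_iUnion] at hs₀P
  obtain ⟨i, hc2i⟩ := hs₀P
  have hXc2 : ∀ w : Plane, X a c2 w = s₀ * cross (q - a) (w - a) := by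
    intro w
    rw [hc2def, X_param_left]
    rfl
  have hvert : ∀ jj : ZMod n, X a c2 (p jj) ≠ 0 := by
    intro jj h
    rw [hXc2] at h
    rcases mul_eq_zero.mp h with h | h
    · exact ne_of_gt hs₀pos h
    · apply hgen jj
      have := cross_skew (q - a) (p jj - a)
      rw [h] at this
      linarith [this]
  have hc2nv : ∀ m : ZMod n, c2 ≠ p m := by
    intro m h
    apply hvert m
    rw [← h, X_self]
  have hpar := hc2i
  rw [polyEdge, segment_eq_image'] at hpar
  obtain ⟨θ, hθ, hθeq0⟩ := hpar
  have hθeq : p i + θ • (p (i+1) - p i) = c2 := hθeq0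
  have hcomb : (1-θ) * X a c2 (p i) + θ * X a c2 (p (i+1)) = 0 := by
    have h2 := X_combo_right a c2 (p i) (p (i+1)) θ
    rw [hθeq, X_self] at h2
    linarith
  have hθ0 : θ ≠ 0 := by
    intro h
    apply hc2nv i
    rw [← hθeq, h]
    simp
  have hθ1 : θ ≠ 1 := by
    intro h
    apply hc2nv (i+1)
    rw [← hθeq, h, one_smul]
    abel
  have hθ0lt : 0 < θ := lt_of_le_of_ne hθ.1 (Ne.symm hθ0)
  have hθ1lt : θ < 1 := lt_of_le_of_ne hθ.2 hθ1
  have hprod : X a c2 (p i) * X a c2 (p (i+1)) < 0 := by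
    rcases lt_trichotomy (X a c2 (p i)) 0 with h | h | h
    · have h2 : 0 < X a c2 (p (i+1)) := by
        nlinarith [hcomb, mul_neg_of_pos_of_neg (sub_pos.mpr hθ1lt) h]
      exact mul_neg_of_neg_of_pos h h2
    · exact absurd h (hvert i)
    · have h2 : X a c2 (p (i+1)) < 0 := by
        nlinarith [hcomb, mul_pos (sub_pos.mpr hθ1lt) h]
      exact mul_neg_of_pos_of_neg h h2
  obtain ⟨j1, hj1T, hj1free⟩ := core hP a ha _ c2 (p i) i i (le_refl _)
    hc2i (left_mem_segment ℝ _ _) rfl hc2nv hs₀free (hvert i)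
  obtain ⟨j2, hj2T, hj2free⟩ := core hP a ha _ c2 (p (i+1)) i (i+1) (le_refl _)
    hc2i (right_mem_segment ℝ _ _) rfl hc2nv hs₀free (hvert (i+1))
  refine ⟨j1, j2, ?_, hj1free, hj2free⟩
  intro heq
  have h1 := hj1T.2.1
  have h2 := hj2T.2.1
  rw [heq] at h1
  have hx2 : 0 < X a c2 (p j2) * X a c2 (p j2) := mul_self_pos.mpr (hvert j2)
  nlinarith [mul_nonneg h1 h2, mul_neg_of_pos_of_neg hx2 hprod]
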